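/- If a non-increasing probability distribution P = (p_1,...,p_n), n ≥ 3, satisfying the AUH constraints maximizes the entropy, then p_1 = q_2 = sum_{i≥3} p_i. -/

import Mathlib

open Finset

/-- A non-increasing probability distribution on symbols `1,…,n` satisfying the
anti-uniform Huffman (AUH) constraints. -/
def IsAUH (n : ℕ) (p : ℕ → ℝ) : Prop :=
  (∀ i ∈ Finset.Icc 1 n, 0 ≤ p i) ∧
  (∀ i j, 1 ≤ i → i ≤ j → j ≤ n → p j ≤ p i) ∧
  (∑ i ∈ Finset.Icc 1 n, p i = 1) ∧
  (∀ i, 1 ≤ i → i ≤ n - 2 → ∑ j ∈ Finset.Icc (i + 2) n, p j ≤ p i)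

/-- Entropy (base 2) of a distribution on symbols `1,…,n`. -/
noncomputable def entropy (n : ℕ) (p : ℕ → ℝ) : ℝ :=
  -∑ i ∈ Finset.Icc 1 n, p i * Real.logb 2 (p i)


lemma sum_upd (g : ℝ → ℝ) (f : ℕ → ℝ) (j : ℕ) (v : ℝ) (s : Finset ℕ) :
    ∑ i ∈ s, g (Function.update f j v i) =
      ∑ i ∈ s, g (f i) + (if j ∈ s then g v - g (f j) else 0) := by
  by_cases h : j ∈ s
  · rw [if_pos h, ← Finset.add_sum_erase s (fun i => g (Function.update f j v i)) h,
      ← Finset.add_sum_erase s (fun i => g (f i)) h, Function.update_self]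
    have : ∑ i ∈ s.erase j, g (Function.update f j v i) = ∑ i ∈ s.erase j, g (f i) :=
      Finset.sum_congr rfl fun i hi => by
        rw [Function.update_of_ne (Finset.ne_of_mem_erase hi)]
    rw [this]; ring
  · rw [if_neg h, add_zero]
    exact Finset.sum_congr rfl fun i hi => by
      rw [Function.update_of_ne (fun e : i = j => h (e ▸ hi))]

lemma entropy_eq (n : ℕ) (p : ℕ → ℝ) :
    entropy n p = (∑ i ∈ Finset.Icc 1 n, Real.negMulLog (p i)) / Real.log 2 := by
  rw [entropy, Finset.sum_div, neg_eq_iff_eq_neg, ← Finset.sum_neg_distrib]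
  refine Finset.sum_congr rfl fun i _ => ?_
  rw [Real.negMulLog, Real.logb]
  ring

lemma negMulLog_perturb {x y ε : ℝ} (hy : 0 ≤ y) (hε : 0 < ε) (h2 : 2 * ε < x - y) :
    Real.negMulLog x + Real.negMulLog y <
      Real.negMulLog (x - ε) + Real.negMulLog (y + ε) := by
  have hxy : y < x := by linarith
  have hx : (0:ℝ) ≤ x := by linarith
  have hd : 0 < x - y := by linarith
  have hne : x ≠ y := ne_of_gt hxy
  have ha : 0 < (x - y - ε) / (x - y) := by apply div_pos <;> linarith
  have hb : 0 < ε / (x - y) := div_pos hε hd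
  have hab : (x - y - ε) / (x - y) + ε / (x - y) = 1 := by field_simp; ring
  have hab' : ε / (x - y) + (x - y - ε) / (x - y) = 1 := by field_simp; ring
  have h1 := Real.strictConcaveOn_negMulLog.2 (Set.mem_Ici.2 hx) (Set.mem_Ici.2 hy)
    hne ha hb hab
  have h2' := Real.strictConcaveOn_negMulLog.2 (Set.mem_Ici.2 hx) (Set.mem_Ici.2 hy)
    hne hb ha hab'
  have e1 : (x - y - ε) / (x - y) * x + ε / (x - y) * y = x - ε := by
    rw [div_mul_eq_mul_div, div_mul_eq_mul_div, ← add_div, div_eq_iff hd.ne']; ring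
  have e2 : ε / (x - y) * x + (x - y - ε) / (x - y) * y = y + ε := by
    rw [div_mul_eq_mul_div, div_mul_eq_mul_div, ← add_div, div_eq_iff hd.ne']; ring
  simp only [smul_eq_mul] at h1 h2'
  rw [e1] at h1
  rw [e2] at h2'
  have k1 : (x - y - ε) / (x - y) * Real.negMulLog x + ε / (x - y) * Real.negMulLog x
      = Real.negMulLog x := by rw [← add_mul, hab, one_mul]
  have k2 : (x - y - ε) / (x - y) * Real.negMulLog y + ε / (x - y) * Real.negMulLog y
      = Real.negMulLog y := by rw [← add_mul, hab, one_mul]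
  linarith [add_lt_add h1 h2']

section perturb

variable (n k : ℕ) (p : ℕ → ℝ) (ε : ℝ)

def qq : ℕ → ℝ :=
  Function.update (Function.update p k (p k - ε)) (k+1) (p (k+1) + ε)

lemma qq_k : qq k p ε k = p k - ε := by
  rw [qq, Function.update_of_ne (by omega), Function.update_self]

lemma qq_k1 : qq k p ε (k+1) = p (k+1) + ε := by
  rw [qq, Function.update_self]

lemma qq_other {i : ℕ} (h1 : i ≠ k) (h2 : i ≠ k+1) : qq k p ε i = p i := by
  rw [qq, Function.update_of_ne h2, Function.update_of_ne h1]

lemma sum_q_upd (g : ℝ → ℝ) (s : Finset ℕ) :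
    ∑ i ∈ s, g (qq k p ε i) = ∑ i ∈ s, g (p i)
      + (if k ∈ s then g (p k - ε) - g (p k) else 0)
      + (if k+1 ∈ s then g (p (k+1) + ε) - g (p (k+1)) else 0) := by
  rw [qq, sum_upd, sum_upd, Function.update_of_ne (by omega : k + 1 ≠ k)]

lemma sum_q (s : Finset ℕ) :
    ∑ i ∈ s, qq k p ε i = ∑ i ∈ s, p i
      + (if k ∈ s then -ε else 0) + (if k+1 ∈ s then ε else 0) := by
  have := sum_q_upd k p ε (fun x => x) s
  rw [this]
  have e1 : p k - ε - p k = -ε := by ring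
  have e2 : p (k + 1) + ε - p (k + 1) = ε := by ring
  rw [e1, e2]

end perturb

lemma perturb_isAUH (n k : ℕ) (p : ℕ → ℝ) (hp : IsAUH n p) (ε : ℝ) (hε : 0 < ε)
    (hk1 : 1 ≤ k) (hkn : k + 1 ≤ n)
    (hgap : 2 * ε < p k - p (k+1))
    (hA : k + 2 ≤ n → ∑ j ∈ Finset.Icc (k+2) n, p j + ε ≤ p k)
    (hB : 2 ≤ k → ∑ j ∈ Finset.Icc (k+1) n, p j + ε ≤ p (k-1)) :
    IsAUH n (qq k p ε) := by
  obtain ⟨hpos, hmono, hsum, hcon⟩ := hp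
  have hpk1 : 0 ≤ p (k+1) := hpos _ (Finset.mem_Icc.mpr ⟨by omega, hkn⟩)
  refine ⟨?_, ?_, ?_, ?_⟩
  · intro i hi
    by_cases h1 : i = k
    · rw [h1, qq_k]; linarith
    by_cases h2 : i = k+1
    · rw [h2, qq_k1]; linarith
    · rw [qq_other k p ε h1 h2]; exact hpos i hi
  · intro i j hi hij hjn
    have hin : i ≤ n := le_trans hij hjn
    by_cases hjk : j = k
    · rw [hjk, qq_k]
      by_cases hik : i = k
      · rw [hik, qq_k]
      · rw [qq_other k p ε hik (by omega)]
        have := hmono i k hi (by omega) (by omega)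
        linarith
    · by_cases hjk1 : j = k+1
      · rw [hjk1, qq_k1]
        by_cases hik : i = k+1
        · rw [hik, qq_k1]
        · by_cases hik' : i = k
          · rw [hik', qq_k]; linarith
          · rw [qq_other k p ε hik' hik]
            have := hmono i k hi (by omega) (by omega)
            linarith
      · rw [qq_other k p ε hjk hjk1]
        by_cases hik : i = k
        · rw [hik, qq_k]
          have h1 := hmono (k+1) j (by omega) (by omega) hjn
          linarith
        · by_cases hik1 : i = k+1
          · rw [hik1, qq_k1]
            have := hmono (k+1) j (by omega) (by omega) hjn
            linarith
          · rw [qq_other k p ε hik hik1]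
            exact hmono i j hi hij hjn
  · rw [sum_q, if_pos (Finset.mem_Icc.mpr ⟨hk1, by omega⟩),
      if_pos (Finset.mem_Icc.mpr ⟨by omega, hkn⟩), hsum]
    ring
  · intro i hi1 hi2
    have hn2 : 2 ≤ n := by omega
    rw [sum_q]
    rcases lt_trichotomy (i+1) k with hlt | heq | hgt
    · rw [if_pos (Finset.mem_Icc.mpr ⟨by omega, by omega⟩),
        if_pos (Finset.mem_Icc.mpr ⟨by omega, hkn⟩),
        qq_other k p ε (by omega) (by omega)]
      have := hcon i hi1 hi2
      linarith
    · rw [if_neg (fun h => by have := (Finset.mem_Icc.mp h).1; omega),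
        if_pos (Finset.mem_Icc.mpr ⟨by omega, hkn⟩),
        qq_other k p ε (by omega) (by omega)]
      have hB' := hB (by omega)
      have e1 : i = k - 1 := by omega
      have e2 : i + 2 = k + 1 := by omega
      rw [e2, e1]
      linarith
    · rcases Nat.lt_or_ge k i with hki | hki
      · rw [if_neg (fun h => by have := (Finset.mem_Icc.mp h).1; omega),
          if_neg (fun h => by have := (Finset.mem_Icc.mp h).1; omega)]
        have h1 := hcon i hi1 hi2
        by_cases hik1 : i = k+1
        · rw [hik1, qq_k1]
          rw [hik1] at h1
          linarith
        · rw [qq_other k p ε (by omega) hik1]; linarith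
      · have hik : i = k := by omega
        rw [hik, if_neg (fun h => by have := (Finset.mem_Icc.mp h).1; omega),
          if_neg (fun h => by have := (Finset.mem_Icc.mp h).1; omega), qq_k]
        have hA' := hA (by omega)
        linarith

lemma perturb_entropy (n k : ℕ) (p : ℕ → ℝ) (ε : ℝ) (hε : 0 < ε)
    (hk1 : 1 ≤ k) (hkn : k + 1 ≤ n) (hpk1 : 0 ≤ p (k+1))
    (hgap : 2 * ε < p k - p (k+1)) :
    entropy n p < entropy n (qq k p ε) := by
  rw [entropy_eq, entropy_eq]
  have hlog : (0:ℝ) < Real.log 2 := Real.log_pos one_lt_two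
  apply div_lt_div_of_pos_right ?_ hlog
  rw [sum_q_upd k p ε Real.negMulLog, if_pos (Finset.mem_Icc.mpr ⟨hk1, by omega⟩),
    if_pos (Finset.mem_Icc.mpr ⟨by omega, hkn⟩)]
  have := negMulLog_perturb hpk1 hε hgap
  linarith
/-- If an AUH distribution on `n ≥ 3` symbols maximizes the entropy, then
`p 1 = q 2 = ∑_{i ≥ 3} p i`. -/
theorem maxEntropy_first_eq (n : ℕ) (hn : 3 ≤ n) (p : ℕ → ℝ) (hp : IsAUH n p)
    (hmax : ∀ p' : ℕ → ℝ, IsAUH n p' → entropy n p' ≤ entropy n p) :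
    p 1 = ∑ i ∈ Finset.Icc 3 n, p i := by
  have hS : ∑ i ∈ Finset.Icc 3 n, p i ≤ p 1 := hp.2.2.2 1 le_rfl (by omega)
  by_contra hne
  have hlt : ∑ i ∈ Finset.Icc 3 n, p i < p 1 :=
    lt_of_le_of_ne hS (fun h => hne h.symm)
  set S := ∑ i ∈ Finset.Icc 3 n, p i with hSdef
  have h21 : p 2 ≤ p 1 := hp.2.1 1 2 le_rfl (by omega) (by omega)
  have hp2 : 0 ≤ p 2 := hp.1 2 (Finset.mem_Icc.mpr ⟨by omega, by omega⟩)
  have hp3 : 0 ≤ p 3 := hp.1 3 (Finset.mem_Icc.mpr ⟨by omega, by omega⟩)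
  by_cases hcase : p 2 < p 1
  · -- perturb at k = 1
    set ε := min (p 1 - p 2) (p 1 - S) / 4 with hεdef
    have hmin1 : min (p 1 - p 2) (p 1 - S) ≤ p 1 - p 2 := min_le_left _ _
    have hmin2 : min (p 1 - p 2) (p 1 - S) ≤ p 1 - S := min_le_right _ _
    have hε : 0 < ε := by
      rw [hεdef]
      apply div_pos (lt_min (by linarith) (by linarith)) (by norm_num)
    have hgap : 2 * ε < p 1 - p (1+1) := by
      have : p (1+1) = p 2 := by norm_num
      rw [this, hεdef]; linarith
    have hA : 1 + 2 ≤ n → ∑ j ∈ Finset.Icc (1+2) n, p j + ε ≤ p 1 := by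
      intro _
      have : ∑ j ∈ Finset.Icc (1+2) n, p j = S := by norm_num [hSdef]
      rw [this, hεdef]; linarith
    have hB : 2 ≤ 1 → ∑ j ∈ Finset.Icc (1+1) n, p j + ε ≤ p (1-1) := by omega
    have hq := perturb_isAUH n 1 p hp ε hε le_rfl (by omega) hgap hA hB
    have hent := perturb_entropy n 1 p ε hε le_rfl (by omega)
      (by norm_num; exact hp2) hgap
    exact absurd (hmax _ hq) (not_le.mpr hent)
  · -- p 2 = p 1, perturb at k = 2
    have h12 : p 2 = p 1 := le_antisymm h21 (not_lt.mp hcase)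
    have hp3S : p 3 ≤ S := by
      rw [hSdef]
      apply Finset.single_le_sum (fun i hi => hp.1 i ?_) (Finset.mem_Icc.mpr ⟨le_rfl, hn⟩)
      have := Finset.mem_Icc.mp hi
      exact Finset.mem_Icc.mpr ⟨by omega, this.2⟩
    have hsplit : S = p 3 + ∑ j ∈ Finset.Icc 4 n, p j := by
      have hset : (Finset.Icc 3 n).erase 3 = Finset.Icc 4 n := by
        rw [Finset.Icc_erase_left, ← Finset.Icc_add_one_left_eq_Ioc]; rfl
      rw [hSdef, ← Finset.add_sum_erase _ p (Finset.mem_Icc.mpr ⟨le_rfl, hn⟩), hset]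
    have hp32 : p 3 < p 2 := by linarith
    set ε := min (p 2 - p 3) (min (p 1 - S) (p 2 - (S - p 3))) / 4 with hεdef
    have hm1 : min (p 2 - p 3) (min (p 1 - S) (p 2 - (S - p 3))) ≤ p 2 - p 3 := min_le_left _ _
    have hm2 : min (p 2 - p 3) (min (p 1 - S) (p 2 - (S - p 3))) ≤ p 1 - S :=
      le_trans (min_le_right _ _) (min_le_left _ _)
    have hm3 : min (p 2 - p 3) (min (p 1 - S) (p 2 - (S - p 3))) ≤ p 2 - (S - p 3) :=
      le_trans (min_le_right _ _) (min_le_right _ _)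
    have hε : 0 < ε := by
      rw [hεdef]
      apply div_pos (lt_min (by linarith) (lt_min (by linarith) (by linarith))) (by norm_num)
    have hgap : 2 * ε < p 2 - p (2+1) := by
      have : p (2+1) = p 3 := by norm_num
      rw [this, hεdef]; linarith
    have hA : 2 + 2 ≤ n → ∑ j ∈ Finset.Icc (2+2) n, p j + ε ≤ p 2 := by
      intro _
      have : ∑ j ∈ Finset.Icc (2+2) n, p j = S - p 3 := by
        norm_num; linarith [hsplit]
      rw [this, hεdef]; linarith
    have hB : 2 ≤ 2 → ∑ j ∈ Finset.Icc (2+1) n, p j + ε ≤ p (2-1) := by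
      intro _
      have : ∑ j ∈ Finset.Icc (2+1) n, p j = S := by norm_num [hSdef]
      have h1 : p (2-1) = p 1 := by norm_num
      rw [this, h1, hεdef]; linarith
    have hq := perturb_isAUH n 2 p hp ε hε (by omega) (by omega) hgap hA hB
    have hent := perturb_entropy n 2 p ε hε (by omega) (by omega)
      (by norm_num; exact hp3) hgap
    exact absurd (hmax _ hq) (not_le.mpr hent)
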